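/- Let n, N be positive integers, let z_1, …, z_n be pairwise distinct nonzero complex numbers, let λ_1, …, λ_N be real numbers and a_1, …, a_N be complex numbers with a_ℓ ≠ 0 for every ℓ and z_k ≠ a_ℓ for all k, ℓ. Assume that for every k = 1, …, n: ∑_{j ≠ k} 1/(z_k − z_j) + ∑_{ℓ=1}^N λ_ℓ/(z_k − a_ℓ) = 0. Set z* := 1/conj(z) for z ≠ 0. Then the points z_1*, …, z_n* satisfy, for every k = 1, …, n: ∑_{j ≠ k} 1/(z_k* − z_j*) + (−n + 1 − ∑_{ℓ=1}^N λ_ℓ)/z_k* + ∑_{ℓ=1}^N λ_ℓ/(z_k* − a_ℓ*) = 0. -/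

import Mathlib

open Complex

theorem inverted_equilibrium
    (n N : ℕ) (hn : 0 < n) (hN : 0 < N)
    (z : Fin n → ℂ) (hzinj : Function.Injective z) (hz0 : ∀ k, z k ≠ 0)
    (lam : Fin N → ℝ) (a : Fin N → ℂ)
    (ha0 : ∀ l, a l ≠ 0) (hza : ∀ k l, z k ≠ a l)
    (heq : ∀ k, (∑ j ∈ Finset.univ.erase k, 1 / (z k - z j)) +
      (∑ l, (lam l : ℂ) / (z k - a l)) = 0) :
    ∀ k, (∑ j ∈ Finset.univ.erase k,
        1 / ((starRingEnd ℂ (z k))⁻¹ - (starRingEnd ℂ (z j))⁻¹)) +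
      (-(n : ℂ) + 1 - ∑ l, (lam l : ℂ)) / (starRingEnd ℂ (z k))⁻¹ +
      (∑ l, (lam l : ℂ) / ((starRingEnd ℂ (z k))⁻¹ - (starRingEnd ℂ (a l))⁻¹)) = 0 := by
  intro k
  set c := starRingEnd ℂ (z k) with hc
  have hc0 : c ≠ 0 := by simp [hc, hz0 k]
  have H : (∑ j ∈ Finset.univ.erase k, 1 / (c - starRingEnd ℂ (z j))) +
      (∑ l, (lam l : ℂ) / (c - starRingEnd ℂ (a l))) = 0 := by
    have := congrArg (starRingEnd ℂ) (heq k)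
    simpa [map_sum, map_add, map_div₀, map_sub, Complex.conj_ofReal, hc] using this
  have h1 : (∑ j ∈ Finset.univ.erase k,
      (1 : ℂ) / (c⁻¹ - (starRingEnd ℂ (z j))⁻¹)) =
      ∑ j ∈ Finset.univ.erase k, (c - c^2 * (1 / (c - starRingEnd ℂ (z j)))) := by
    refine Finset.sum_congr rfl fun j hj => ?_
    have hj0 : starRingEnd ℂ (z j) ≠ 0 := by simp [hz0 j]
    have hzz : z k ≠ z j := fun h => (Finset.mem_erase.mp hj).1 (hzinj h).symm
    have hne : c - starRingEnd ℂ (z j) ≠ 0 := by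
      rw [sub_ne_zero]
      exact fun h => hzz ((starRingEnd ℂ).injective h)
    have hne' : -c + starRingEnd ℂ (z j) ≠ 0 := by
      intro h; apply hne; linear_combination -h
    field_simp
    linear_combination (-(starRingEnd ℂ (z j))) * mul_inv_cancel₀ (by rwa [neg_add_eq_sub] at hne' : starRingEnd ℂ (z j) - c ≠ 0)
  have h2 : (∑ l, (lam l : ℂ) / (c⁻¹ - (starRingEnd ℂ (a l))⁻¹)) =
      ∑ l, ((lam l : ℂ) * c - c^2 * ((lam l : ℂ) / (c - starRingEnd ℂ (a l)))) := by
    refine Finset.sum_congr rfl fun l _ => ?_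
    have hl0 : starRingEnd ℂ (a l) ≠ 0 := by simp [ha0 l]
    have hne : c - starRingEnd ℂ (a l) ≠ 0 := by
      rw [sub_ne_zero]
      exact fun h => hza k l ((starRingEnd ℂ).injective h)
    have hne' : -c + starRingEnd ℂ (a l) ≠ 0 := by
      intro h; apply hne; linear_combination -h
    field_simp
    linear_combination (-((lam l : ℂ) * starRingEnd ℂ (a l))) * mul_inv_cancel₀ (by rwa [neg_add_eq_sub] at hne' : starRingEnd ℂ (a l) - c ≠ 0)
  rw [h1, h2, div_eq_mul_inv, inv_inv]
  rw [Finset.sum_sub_distrib, Finset.sum_sub_distrib, Finset.sum_const,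
    Finset.card_erase_of_mem (Finset.mem_univ k), Finset.card_univ, Fintype.card_fin,
    ← Finset.mul_sum, ← Finset.mul_sum, ← Finset.sum_mul]
  have hcast : ((n - 1 : ℕ) : ℂ) = (n : ℂ) - 1 := by
    push_cast [Nat.cast_sub hn]
    ring
  rw [nsmul_eq_mul, hcast]
  linear_combination (-c^2) * H
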